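/- arXiv:2002.01748 — 6 statements merged into one kernel-verified Lean document; each statement's English description precedes it below -/
import Mathlib

section
/- For integers n, k, r with n ≥ rk and r ≥ 2, and a partition P = {P_1, ..., P_l} of [n] with |P_i| ≤ r for all i, the chromatic number of KG^r(n,k,P) is at most ⌈(n - r(k-1))/(r-1)⌉. -/
open Finset

/-- A coloring of the vertices is proper if no edge is monochromatic. -/
def IsProperColoring {V : Type*} (E : Set (Multiset V)) {t : ℕ} (c : V → Fin t) : Prop :=
  ∀ e ∈ E, ∃ a ∈ e, ∃ b ∈ e, c a ≠ c b

/-- The chromatic number of a hypergraph with edge set `E`, as an extended natural number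
(infinity if no proper coloring exists). -/
noncomputable def hypChromatic {V : Type*} (E : Set (Multiset V)) : ℕ∞ :=
  sInf {N : ℕ∞ | ∃ t : ℕ, N = (t : ℕ∞) ∧ ∃ c : V → Fin t, IsProperColoring E c}

/-- `P : Fin l → Finset (Fin n)` is a partition of `[n]` into nonempty blocks. -/
def IsPartition (n l : ℕ) (P : Fin l → Finset (Fin n)) : Prop :=
  (∀ j, (P j).Nonempty) ∧ ∀ x : Fin n, ∃! j, x ∈ P j

/-- Vertices of `KG^r(n,k,P)`: `k`-subsets of `[n]` meeting each block of `P`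
in at most one element. -/
def KGPVertex (n k l : ℕ) (P : Fin l → Finset (Fin n)) : Type :=
  {A : Finset (Fin n) // A.card = k ∧ ∀ j, (A ∩ P j).card ≤ 1}

/-- Edges of `KG^r(n,k,P)`: `r`-subsets of vertices that are pairwise disjoint. -/
def KGPEdges (n k l r : ℕ) (P : Fin l → Finset (Fin n)) :
    Set (Multiset (KGPVertex n k l P)) :=
  {e | Multiset.card e = r ∧ e.Nodup ∧
    ∀ a ∈ e, ∀ b ∈ e, a ≠ b → Disjoint a.1 b.1}

theorem chromatic_KGP_le (n k l r : ℕ) (P : Fin l → Finset (Fin n))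
    (hk : 1 ≤ k) (hr : 2 ≤ r) (hn : r * k ≤ n)
    (hP : IsPartition n l P) (hPr : ∀ j, (P j).card ≤ r) :
    hypChromatic (KGPEdges n k l r P) ≤ ((n - r * (k - 1)) ⌈/⌉ (r - 1) : ℕ) := by
  classical
  set t : ℕ := (n - r * (k - 1)) ⌈/⌉ (r - 1) with ht
  have hd : 0 < r - 1 := by omega
  have hkey : n - r * (k - 1) ≤ (r - 1) * t := by
    simpa [smul_eq_mul] using le_smul_ceilDiv (b := n - r * (k - 1)) hd
  have hrk : r * k = r * (k - 1) + r := by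
    obtain ⟨k', rfl⟩ : ∃ k', k = k' + 1 := ⟨k - 1, by omega⟩
    simp [Nat.mul_succ]
  have hsub : r * (k - 1) ≤ n := by omega
  have htpos : 1 ≤ t := by
    rcases Nat.eq_zero_or_pos t with h | h
    · rw [h, Nat.mul_zero] at hkey; omega
    · exact h
  have hkey2 : n - r * k + 1 ≤ (t - 1) * (r - 1) := by
    have h1 : (t - 1) * (r - 1) = t * (r - 1) - (r - 1) := by
      rw [Nat.sub_mul, one_mul]
    have h2 : t * (r - 1) = (r - 1) * t := Nat.mul_comm _ _
    omega
  -- the coloring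
  have hne : ∀ A : KGPVertex n k l P, A.1.Nonempty := by
    intro A
    rw [← Finset.card_pos, A.2.1]; omega
  set m : KGPVertex n k l P → ℕ := fun A => (A.1.min' (hne A)).1 with hm
  set c : KGPVertex n k l P → Fin t :=
    fun A => ⟨min (m A / (r - 1)) (t - 1), by omega⟩ with hc
  apply sInf_le
  refine ⟨t, rfl, c, ?_⟩
  intro e he
  obtain ⟨hcard, hnd, hdisj⟩ := he
  by_contra hmono
  push_neg at hmono
  set s : Finset (KGPVertex n k l P) := ⟨e, hnd⟩ with hs
  have hsmem : ∀ a, a ∈ s ↔ a ∈ e := fun a => Iff.rfl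
  have hscard : s.card = r := hcard
  have hs2 : s.Nonempty := by rw [← Finset.card_pos, hscard]; omega
  obtain ⟨a₀, ha₀⟩ := hs2
  have hinj : ∀ a ∈ s, ∀ b ∈ s, m a = m b → a = b := by
    intro a ha b hb hab
    by_contra hne'
    have hd2 := hdisj a ha b hb hne'
    have hx : a.1.min' (hne a) = b.1.min' (hne b) := Fin.ext hab
    have h1 : a.1.min' (hne a) ∈ a.1 := Finset.min'_mem _ _
    have h2 : a.1.min' (hne a) ∈ b.1 := hx ▸ Finset.min'_mem _ _
    exact (Finset.disjoint_left.1 hd2 h1) h2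
  have hsamec : ∀ a ∈ s, c a = c a₀ := fun a ha => hmono a ha a₀ ha₀
  by_cases hcase : m a₀ / (r - 1) < t - 1
  · -- case 1: small color, pigeonhole on residues
    set i : ℕ := m a₀ / (r - 1) with hi
    have hq : ∀ a ∈ s, m a / (r - 1) = i := by
      intro a ha
      have := hsamec a ha
      rw [hc] at this
      have h := congrArg Fin.val this
      simp only [] at h
      omega
    have hresinj : Set.InjOn (fun a => m a % (r - 1)) s := by
      intro a ha b hb hab
      have ha' : a ∈ s := ha
      have hb' : b ∈ s := hb
      apply hinj a ha' b hb'
      have h1 := Nat.div_add_mod (m a) (r - 1)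
      have h2 := Nat.div_add_mod (m b) (r - 1)
      rw [hq a ha'] at h1
      rw [hq b hb'] at h2
      have hab' : m a % (r - 1) = m b % (r - 1) := hab
      omega
    have himg : s.image (fun a => m a % (r - 1)) ⊆ Finset.range (r - 1) := by
      intro x hx
      obtain ⟨a, _, rfl⟩ := Finset.mem_image.1 hx
      exact Finset.mem_range.2 (Nat.mod_lt _ hd)
    have := Finset.card_le_card himg
    rw [Finset.card_image_of_injOn hresinj, hscard, Finset.card_range] at this
    omega
  · -- case 2: big color, all mins large
    have hbig : ∀ a ∈ s, (t - 1) * (r - 1) ≤ m a := by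
      intro a ha
      have h1 := hsamec a ha
      rw [hc] at h1
      have h := congrArg Fin.val h1
      simp only [] at h
      have hq : t - 1 ≤ m a / (r - 1) := by omega
      calc (t - 1) * (r - 1) ≤ (m a / (r - 1)) * (r - 1) := Nat.mul_le_mul_right _ hq
        _ ≤ m a := Nat.div_mul_le_self _ _
    set B : Finset (Fin n) := s.biUnion (fun a => a.1) with hB
    have hBcard : B.card = r * k := by
      rw [hB, Finset.card_biUnion]
      · rw [Finset.sum_congr rfl (fun a _ => a.2.1), Finset.sum_const, hscard, smul_eq_mul]
      · intro a ha b hb hab; exact hdisj a ha b hb hab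
    have hBsub : B.image Fin.val ⊆ Finset.Ico ((t - 1) * (r - 1)) n := by
      intro x hx
      obtain ⟨y, hy, rfl⟩ := Finset.mem_image.1 hx
      obtain ⟨a, ha, hya⟩ := Finset.mem_biUnion.1 hy
      refine Finset.mem_Ico.2 ⟨?_, y.2⟩
      calc (t - 1) * (r - 1) ≤ m a := hbig a ha
        _ ≤ y.1 := Finset.min'_le _ _ hya
    have := Finset.card_le_card hBsub
    rw [Finset.card_image_of_injective _ Fin.val_injective, hBcard, Nat.card_Ico] at this
    omega
end

section
/- Let S = (s_1,...,s_n) with 0 ≤ s_i ≤ r, let n̄ = s_1 + ... + s_n, and let P = {P_1,...,P_n} be the partition of [n̄] into consecutive blocks of sizes s_1, ..., s_n. Then the map f : [n̄] → [n] sending elements of P_i to i induces a hypergraph homomorphism from KG^r(n̄, k, P) to KG^r_S(n,k), and consequently χ(KG^r_S(n,k)) ≥ χ(KG^r(n̄, k, P)). -/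
open Finset

/-- Vertices of `KG^r_S(n,k)`: the `k`-subsets of `[n]`. -/
def KGSVertex (n k : ℕ) : Type :=
  {A : Finset (Fin n) // A.card = k}

/-- Edges of `KG^r_S(n,k)`: multisets `{A_1, …, A_r}` of `k`-subsets that are `S`-disjoint,
i.e. each `i ∈ [n]` belongs to at most `s i` of the sets. -/
def KGSEdges (n k r : ℕ) (s : Fin n → ℕ) : Set (Multiset (KGSVertex n k)) :=
  {e | Multiset.card e = r ∧ ∀ x : Fin n, (e.filter fun A => x ∈ A.1).card ≤ s x}

/-- The map `f : [n̄] → [n]` sending the `i`-th consecutive block of size `s i` to `i`. -/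
def IsBlockMap (n : ℕ) (s : Fin n → ℕ) (f : Fin (∑ i, s i) → Fin n) : Prop :=
  ∀ x : Fin (∑ i, s i), ∀ i : Fin n,
    f x = i ↔ (∑ j ∈ Finset.univ.filter (fun j => j < i), s j) ≤ x.val ∧
      x.val < ∑ j ∈ Finset.univ.filter (fun j => j ≤ i), s j

theorem KGS_hom_of_KGP (n k r : ℕ) (s : Fin n → ℕ) (hr : 2 ≤ r) (hs : ∀ i, s i ≤ r)
    (f : Fin (∑ i, s i) → Fin n) (hf : IsBlockMap n s f)
    (P : Fin n → Finset (Fin (∑ i, s i)))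
    (hP : ∀ i, P i = Finset.univ.filter (fun x => f x = i)) :
    ∃ φ : KGPVertex (∑ i, s i) k n P → KGSVertex n k,
      (∀ v, (φ v).1 = v.1.image f) ∧
      (∀ e ∈ KGPEdges (∑ i, s i) k n r P, e.map φ ∈ KGSEdges n k r s) ∧
      hypChromatic (KGPEdges (∑ i, s i) k n r P) ≤ hypChromatic (KGSEdges n k r s) := by
  classical
  -- f is injective on each vertex of KGP
  have hmemP : ∀ (x : Fin (∑ i, s i)) (i : Fin n), x ∈ P i ↔ f x = i := by
    intro x i
    rw [hP]
    simp
  have hinj : ∀ v : KGPVertex (∑ i, s i) k n P, Set.InjOn f v.1 := by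
    rintro ⟨A, hA, hA2⟩ x hx y hy hxy
    have hxP : x ∈ A ∩ P (f x) := by
      simp only [Finset.mem_inter]
      exact ⟨hx, (hmemP x (f x)).mpr rfl⟩
    have hyP : y ∈ A ∩ P (f x) := by
      simp only [Finset.mem_inter]
      exact ⟨hy, (hmemP y (f x)).mpr hxy.symm⟩
    exact Finset.card_le_one.mp (hA2 (f x)) x hxP y hyP
  -- cardinality of blocks
  have hcardP : ∀ i, (P i).card = s i := by
    intro i
    have hsub : (Finset.univ.filter (fun j => j ≤ i)).sum s ≤ ∑ i, s i :=
      Finset.sum_le_sum_of_subset (Finset.subset_univ _)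
    set a := ∑ j ∈ Finset.univ.filter (fun j => j < i), s j with ha
    set b := ∑ j ∈ Finset.univ.filter (fun j => j ≤ i), s j with hb
    have hab : b = s i + a := by
      rw [ha, hb]
      have : Finset.univ.filter (fun j => j ≤ i) =
          insert i (Finset.univ.filter (fun j => j < i)) := by
        ext j
        simp [le_iff_lt_or_eq, or_comm, eq_comm]
      rw [this, Finset.sum_insert (by simp)]
    have himg : (P i).image Fin.val = Finset.Ico a b := by
      ext m
      simp only [Finset.mem_image, Finset.mem_Ico]
      constructor
      · rintro ⟨x, hx, rfl⟩
        exact (hf x i).mp ((hmemP x i).mp hx)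
      · rintro ⟨h1, h2⟩
        have hm : m < ∑ i, s i := lt_of_lt_of_le h2 hsub
        refine ⟨⟨m, hm⟩, ?_, rfl⟩
        exact (hmemP _ i).mpr ((hf ⟨m, hm⟩ i).mpr ⟨h1, h2⟩)
    have := congrArg Finset.card himg
    rw [Finset.card_image_of_injective _ Fin.val_injective, Nat.card_Ico] at this
    omega
  -- the vertex map
  refine ⟨fun v => ⟨v.1.image f, by
    rw [Finset.card_image_of_injOn (hinj v)]; exact v.2.1⟩, fun v => rfl, ?_, ?_⟩
  · -- edges map to edges
    rintro e ⟨hcard, hnodup, hdisj⟩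
    refine ⟨(Multiset.card_map ..).trans hcard, ?_⟩
    intro x
    refine le_of_eq_of_le ((congrArg Multiset.card (Multiset.filter_map ..)).trans (Multiset.card_map ..)) ?_
    -- pass to the Finset of the nodup multiset
    set F : Finset (KGPVertex (∑ i, s i) k n P) := ⟨e, hnodup⟩ with hF
    have hval : (F.filter (fun a => x ∈ a.1.image f)).card =
        (Multiset.filter (fun a => x ∈ (a.1.image f)) e).card := rfl
    have hmemF : ∀ a, a ∈ F ↔ a ∈ e := fun a => Iff.rfl
    have key : F.filter (fun a => x ∈ a.1.image f) ⊆
        (P x).biUnion (fun y => F.filter (fun a => y ∈ a.1)) := by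
      intro a ha
      rw [Finset.mem_filter] at ha
      obtain ⟨y, hy, hfy⟩ := Finset.mem_image.mp ha.2
      exact Finset.mem_biUnion.mpr ⟨y, (hmemP y x).mpr hfy,
        Finset.mem_filter.mpr ⟨ha.1, hy⟩⟩
    have hone : ∀ y ∈ P x, (F.filter (fun a => y ∈ a.1)).card ≤ 1 := by
      intro y _
      rw [Finset.card_le_one]
      intro a ha b hb
      rw [Finset.mem_filter] at ha hb
      by_contra hne
      exact (Finset.disjoint_left.mp (hdisj a ha.1 b hb.1 hne) ha.2) hb.2
    calc (Multiset.filter (fun a => x ∈ ((fun v : KGPVertex (∑ i, s i) k n P =>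
            (⟨v.1.image f, by rw [Finset.card_image_of_injOn (hinj v)]; exact v.2.1⟩ :
              KGSVertex n k)) a).1) e).card
        = (F.filter (fun a => x ∈ a.1.image f)).card := rfl
      _ ≤ ((P x).biUnion (fun y => F.filter (fun a => y ∈ a.1))).card :=
          Finset.card_le_card key
      _ ≤ ∑ y ∈ P x, (F.filter (fun a => y ∈ a.1)).card := Finset.card_biUnion_le
      _ ≤ ∑ _y ∈ P x, 1 := Finset.sum_le_sum hone
      _ = (P x).card := by simp
      _ = s x := hcardP x
  · -- chromatic number inequality
    apply sInf_le_sInf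
    rintro M ⟨t, rfl, c, hc⟩
    refine ⟨t, rfl, fun v => c (⟨v.1.image f, by
      rw [Finset.card_image_of_injOn (hinj v)]; exact v.2.1⟩ : KGSVertex n k), ?_⟩
    intro e he
    obtain ⟨hcard, hnodup, hdisj⟩ := he
    have hedge : e.map (fun v : KGPVertex (∑ i, s i) k n P => (⟨v.1.image f, by
        rw [Finset.card_image_of_injOn (hinj v)]; exact v.2.1⟩ : KGSVertex n k)) ∈
        KGSEdges n k r s := by
      refine ⟨(Multiset.card_map ..).trans hcard, ?_⟩
      intro x
      refine le_of_eq_of_le ((congrArg Multiset.card (Multiset.filter_map ..)).trans (Multiset.card_map ..)) ?_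
      set F : Finset (KGPVertex (∑ i, s i) k n P) := ⟨e, hnodup⟩ with hF
      have key : F.filter (fun a => x ∈ a.1.image f) ⊆
          (P x).biUnion (fun y => F.filter (fun a => y ∈ a.1)) := by
        intro a ha
        rw [Finset.mem_filter] at ha
        obtain ⟨y, hy, hfy⟩ := Finset.mem_image.mp ha.2
        exact Finset.mem_biUnion.mpr ⟨y, (hmemP y x).mpr hfy,
          Finset.mem_filter.mpr ⟨ha.1, hy⟩⟩
      have hone : ∀ y ∈ P x, (F.filter (fun a => y ∈ a.1)).card ≤ 1 := by
        intro y _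
        rw [Finset.card_le_one]
        intro a ha b hb
        rw [Finset.mem_filter] at ha hb
        by_contra hne
        exact (Finset.disjoint_left.mp (hdisj a ha.1 b hb.1 hne) ha.2) hb.2
      calc (Multiset.filter (fun a => x ∈ ((fun v : KGPVertex (∑ i, s i) k n P =>
              (⟨v.1.image f, by rw [Finset.card_image_of_injOn (hinj v)]; exact v.2.1⟩ :
                KGSVertex n k)) a).1) e).card
          = (F.filter (fun a => x ∈ a.1.image f)).card := rfl
        _ ≤ ((P x).biUnion (fun y => F.filter (fun a => y ∈ a.1))).card :=
            Finset.card_le_card key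
        _ ≤ ∑ y ∈ P x, (F.filter (fun a => y ∈ a.1)).card := Finset.card_biUnion_le
        _ ≤ ∑ _y ∈ P x, 1 := Finset.sum_le_sum hone
        _ = (P x).card := by simp
        _ = s x := hcardP x
    obtain ⟨a, ha, b, hb, hab⟩ := hc _ hedge
    obtain ⟨a', ha', rfl⟩ := Multiset.mem_map.mp ha
    obtain ⟨b', hb', rfl⟩ := Multiset.mem_map.mp hb
    exact ⟨a', ha', b', hb', hab⟩
end

section
/- Let S = (s_1,...,s_n) with s_1 ≤ s_2 ≤ ... ≤ s_n < r and s_1 + ... + s_n ≥ rk. Define t_1 to be the largest integer with s_1 + ... + s_{t_1} < rk, and inductively t_i (for i ≥ 2) the largest integer such that the sum of s_j for j from t_1+...+t_{i-1}+1 to t_1+...+t_{i-1}+t_i is less than r. If the process terminates with t_1 + ... + t_l = n, then χ(KG^r_S(n,k)) ≤ l. -/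
open Finset

/-- The sum of `s j` over indices `j` of `[n]` (0-indexed) lying in `[a, b)`. -/
def blockSum (n : ℕ) (s : Fin n → ℕ) (a b : ℕ) : ℕ :=
  ∑ j ∈ Finset.univ.filter (fun j : Fin n => a ≤ j.val ∧ j.val < b), s j

lemma swap_sum' {n k : ℕ} (B : Finset (Fin n)) (e : Multiset (KGSVertex n k)) :
    ∑ x ∈ B, Multiset.card (e.filter fun A => x ∈ A.1)
      = (e.map fun A => (B ∩ A.1).card).sum := by
  induction e using Multiset.induction with
  | empty => simp
  | cons A t ih =>
    have h : ∀ x : Fin n, Multiset.card ((A ::ₘ t).filter fun A' => x ∈ A'.1)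
        = (if x ∈ A.1 then 1 else 0) + Multiset.card (t.filter fun A' => x ∈ A'.1) := by
      intro x; rw [Multiset.filter_cons]; split <;> simp <;> omega
    simp_rw [h]
    rw [Finset.sum_add_distrib, ih, Multiset.map_cons, Multiset.sum_cons]
    congr 1
    rw [Finset.sum_ite_mem]
    simp


/-- Erdős' greedy upper bound: if `s_1 ≤ … ≤ s_n < r`, `∑ s_i ≥ rk`, and
`T i = t_1 + ⋯ + t_i` are the partial sums of the greedy block sizes
(`t_1` largest with `s_1 + ⋯ + s_{t_1} < rk`; `t_i` largest with the sum of the next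
`t_i` values less than `r`), terminating with `T l = n`, then `χ(KG^r_S(n,k)) ≤ l`. -/
theorem chromatic_KGS_le_greedy (n k r l : ℕ) (s : Fin n → ℕ) (T : ℕ → ℕ)
    (hk : 1 ≤ k) (hr : 2 ≤ r) (hl : 1 ≤ l)
    (hmono : ∀ i j : Fin n, i ≤ j → s i ≤ s j)
    (hsr : ∀ i, s i < r)
    (hsum : r * k ≤ ∑ i, s i)
    (hT0 : T 0 = 0) (hTl : T l = n)
    (hTmono : ∀ i < l, T i < T (i + 1))
    (ht1 : blockSum n s 0 (T 1) < r * k ∧ (T 1 = n ∨ r * k ≤ blockSum n s 0 (T 1 + 1)))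
    (hti : ∀ i, 2 ≤ i → i ≤ l →
      blockSum n s (T (i - 1)) (T i) < r ∧
        (T i = n ∨ r ≤ blockSum n s (T (i - 1)) (T i + 1))) :
    hypChromatic (KGSEdges n k r s) ≤ (l : ℕ∞) := by
  classical
  -- the locating lemma
  have hfind : ∀ m : ℕ, T 1 ≤ m → m < n → ∃ i, 2 ≤ i ∧ i ≤ l ∧ T (i - 1) ≤ m ∧ m < T i := by
    intro m hm1 hmn
    have hex : ∃ i, m < T i := ⟨l, by omega⟩
    set i := Nat.find hex with hi
    have hspec : m < T i := Nat.find_spec hex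
    have hle : i ≤ l := Nat.find_le (by omega)
    have h2 : 2 ≤ i := by
      by_contra h
      interval_cases i <;> omega
    have hlow : ¬ m < T (i - 1) := Nat.find_min hex (by omega)
    exact ⟨i, h2, hle, by omega, hspec⟩
  set P : KGSVertex n k → ℕ → Prop :=
    fun A i => 2 ≤ i ∧ i ≤ l ∧ ∃ x ∈ A.1, T (i - 1) ≤ x.val ∧ x.val < T i with hP
  set c : KGSVertex n k → Fin l := fun A =>
    if h : ∃ i, P A i then ⟨h.choose - 1, by have := h.choose_spec; omega⟩
    else ⟨0, hl⟩ with hc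
  have hproper : IsProperColoring (KGSEdges n k r s) c := by
    intro e he
    by_contra hcontra
    push_neg at hcontra
    obtain ⟨hcard, hbound⟩ := he
    -- e is nonempty
    obtain ⟨A0, hA0⟩ : ∃ A, A ∈ e := by
      rcases Multiset.empty_or_exists_mem e with h | h
      · subst h; simp at hcard; omega
      · exact h
    have hall : ∀ A ∈ e, c A = c A0 := fun A hA => hcontra A hA A0 hA0
    by_cases hcase : (c A0).val = 0
    · -- everyone is in the first block
      set B : Finset (Fin n) := Finset.univ.filter (fun j : Fin n => 0 ≤ j.val ∧ j.val < T 1)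
        with hB
      have hsub : ∀ A ∈ e, A.1 ⊆ B := by
        intro A hA x hx
        have hcA : (c A).val = 0 := by rw [hall A hA]; exact hcase
        have hnex : ¬ ∃ i, P A i := by
          intro hex
          obtain ⟨h2, -, -⟩ := hex.choose_spec
          rw [hc] at hcA
          simp only [dif_pos hex, Fin.val_mk] at hcA
          omega
        simp only [hB, Finset.mem_filter, Finset.mem_univ, true_and]
        refine ⟨Nat.zero_le _, ?_⟩
        by_contra hxT
        push_neg at hxT
        obtain ⟨i, h2, hil, hlow, hhigh⟩ := hfind x.val hxT x.isLt
        exact hnex ⟨i, h2, hil, x, hx, hlow, hhigh⟩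
      have hsum1 : ∑ x ∈ B, Multiset.card (e.filter fun A => x ∈ A.1) = r * k := by
        rw [swap_sum']
        have : (e.map fun A => (B ∩ A.1).card) = e.map (fun _ => k) := by
          apply Multiset.map_congr rfl
          intro A hA
          rw [Finset.inter_eq_right.mpr (hsub A hA), A.2]
        rw [this, Multiset.map_const', Multiset.sum_replicate, hcard, smul_eq_mul]
      have hsum2 : ∑ x ∈ B, Multiset.card (e.filter fun A => x ∈ A.1) ≤ blockSum n s 0 (T 1) := by
        unfold blockSum
        exact Finset.sum_le_sum fun x _ => hbound x
      omega
    · -- everyone meets block i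
      have hex0 : ∃ i, P A0 i := by
        by_contra h
        apply hcase
        rw [hc]
        simp only [dif_neg h, Fin.val_mk]
      set i := hex0.choose with hidef
      have hspec0 := hex0.choose_spec
      have hival : (c A0).val = i - 1 := by
        rw [hc]; simp only [dif_pos hex0]; rfl
      obtain ⟨h2i, hil, _⟩ := hspec0
      set B : Finset (Fin n) :=
        Finset.univ.filter (fun j : Fin n => T (i - 1) ≤ j.val ∧ j.val < T i) with hB
      have hmeet : ∀ A ∈ e, ∃ x ∈ A.1, x ∈ B := by
        intro A hA
        have hcA : (c A).val = i - 1 := by rw [hall A hA]; exact hival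
        have hexA : ∃ j, P A j := by
          by_contra h
          rw [hc] at hcA
          simp only [dif_neg h, Fin.val_mk] at hcA
          omega
        have hspecA := hexA.choose_spec
        have hvA : (c A).val = hexA.choose - 1 := by
          rw [hc]; simp only [dif_pos hexA]
        obtain ⟨h2A, hlA, x, hx, hxlo, hxhi⟩ := hspecA
        have : hexA.choose = i := by omega
        rw [this] at hxlo hxhi
        exact ⟨x, hx, by simp [hB]; exact ⟨hxlo, hxhi⟩⟩
      have hsum1 : r ≤ ∑ x ∈ B, Multiset.card (e.filter fun A => x ∈ A.1) := by
        rw [swap_sum']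
        calc r = (e.map fun _ => 1).sum := by
                  rw [Multiset.map_const', Multiset.sum_replicate, hcard, smul_eq_mul, mul_one]
          _ ≤ (e.map fun A => (B ∩ A.1).card).sum := by
                apply Multiset.sum_map_le_sum_map
                intro A hA
                obtain ⟨x, hx, hxB⟩ := hmeet A hA
                have : x ∈ B ∩ A.1 := Finset.mem_inter.mpr ⟨hxB, hx⟩
                exact Finset.card_pos.mpr ⟨x, this⟩
      have hsum2 : ∑ x ∈ B, Multiset.card (e.filter fun A => x ∈ A.1)
          ≤ blockSum n s (T (i - 1)) (T i) := by
        unfold blockSum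
        exact Finset.sum_le_sum fun x _ => hbound x
      have := (hti i h2i hil).1
      omega
  exact sInf_le ⟨l, rfl, c, hproper⟩
end

section
/- If the conclusion of Theorem (χ(KG^r(n,k,P)) = ⌈(n-r(k-1))/(r-1)⌉ for all partitions P of [n] with all blocks of size ≤ r, whenever n ≥ rk) holds for r = r_1 and for r = r_2, then it holds for r = r_1 r_2. -/
open Finset

/-- The conclusion of the main theorem for a given uniformity `r`: for all `n ≥ rk` and
all partitions of `[n]` with blocks of size at most `r`, the chromatic number of
`KG^r(n,k,P)` equals `⌈(n - r(k-1))/(r-1)⌉`. -/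
def ErdosKneserProperty (r : ℕ) : Prop :=
  ∀ n k l : ℕ, ∀ P : Fin l → Finset (Fin n),
    1 ≤ k → r * k ≤ n → IsPartition n l P → (∀ j, (P j).card ≤ r) →
      hypChromatic (KGPEdges n k l r P) = ((n - r * (k - 1)) ⌈/⌉ (r - 1) : ℕ)

lemma hyp_le {V : Type*} {E : Set (Multiset V)} {t : ℕ} (c : V → Fin t)
    (hc : IsProperColoring E c) : hypChromatic E ≤ t :=
  sInf_le ⟨t, rfl, c, hc⟩

lemma improper_of_lt {V : Type*} {E : Set (Multiset V)} {T : ℕ}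
    (hE : hypChromatic E = (T : ℕ∞)) {C : ℕ} (hC : C < T) (c : V → Fin C) :
    ∃ e ∈ E, ∀ a ∈ e, ∀ b ∈ e, c a = c b := by
  by_contra h
  push_neg at h
  have hprop : IsProperColoring E c := by
    intro e he
    obtain ⟨a, ha, b, hb, hab⟩ := h e he
    exact ⟨a, ha, b, hb, hab⟩
  have h2 := hyp_le c hprop
  rw [hE] at h2
  have : T ≤ C := by exact_mod_cast h2
  omega

lemma lt_ceilDiv {C M a : ℕ} (ha : 0 < a) (h : a * C < M) : C < M ⌈/⌉ a := by
  by_contra hle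
  push_neg at hle
  have := (ceilDiv_le_iff_le_mul ha (b := M) (c := C)).mp hle
  omega

lemma ceilDiv_mul_ge {M a : ℕ} (ha : 0 < a) : M ≤ a * (M ⌈/⌉ a) := by
  have := le_smul_ceilDiv ha (b := M)
  simpa [smul_eq_mul] using this

lemma sum_card_le {α : Type*} [DecidableEq α] (e : Multiset (Finset α)) (T : Finset α)
    (hsub : ∀ a ∈ e, a ⊆ T) (hdisj : ∀ a ∈ e, ∀ b ∈ e, a ≠ b → Disjoint a b)
    (hnd : e.Nodup) : (e.map Finset.card).sum ≤ T.card := by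
  classical
  set s : Finset (Finset α) := e.toFinset with hs
  have he : e = s.val := by
    rw [hs]; exact (Multiset.toFinset_val e ▸ (Multiset.dedup_eq_self.mpr hnd)).symm
  rw [he]
  have : (s.val.map Finset.card).sum = ∑ a ∈ s, a.card := rfl
  rw [this]
  have hb : ∑ a ∈ s, a.card = (s.biUnion id).card := by
    rw [Finset.card_biUnion]
    · simp
    · intro a ha b hb hab
      exact hdisj a (by rw [he]; exact ha) b (by rw [he]; exact hb) hab
  rw [hb]
  apply Finset.card_le_card
  intro x hx
  obtain ⟨a, ha, hxa⟩ := Finset.mem_biUnion.mp hx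
  exact hsub a (by rw [he]; exact ha) hxa

lemma fiber_partition {N : ℕ} {β : Type*} [DecidableEq β] (g : Fin N → β) :
    ∃ (l' : ℕ) (Q : Fin l' → Finset (Fin N)) (v : Fin l' → β),
      (∀ m, Q m = univ.filter (fun x => g x = v m)) ∧ IsPartition N l' Q := by
  classical
  set S : Finset β := univ.image g with hS
  refine ⟨S.card, fun m => univ.filter (fun x => g x = (S.equivFin.symm m : β)),
    fun m => (S.equivFin.symm m : β), fun m => rfl, ?_, ?_⟩
  · intro m
    have hm : (S.equivFin.symm m : β) ∈ S := (S.equivFin.symm m).2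
    obtain ⟨x, _, hx⟩ := mem_image.mp hm
    exact ⟨x, by simp [hx]⟩
  · intro x
    have hgx : g x ∈ S := by simp [hS]
    refine ⟨S.equivFin ⟨g x, hgx⟩, by simp, ?_⟩
    intro m hm
    simp only [mem_filter, mem_univ, true_and] at hm
    apply_fun S.equivFin.symm
    apply Subtype.ext
    simp [← hm]

lemma upper_coloring (r n k l : ℕ) (P : Fin l → Finset (Fin n)) (hr : 2 ≤ r)
    (hk : 1 ≤ k) (hn : r * k ≤ n) :
    ∃ c : KGPVertex n k l P → Fin ((n - r * (k - 1)) ⌈/⌉ (r - 1)),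
      IsProperColoring (KGPEdges n k l r P) c := by
  classical
  set t := (n - r * (k - 1)) ⌈/⌉ (r - 1) with ht
  have hw : r * (k - 1) + r = r * k := by
    have hk1 : k - 1 + 1 = k := by omega
    calc r * (k-1) + r = r * ((k-1)+1) := by ring
    _ = r * k := by rw [hk1]
  have hm : r ≤ n - r * (k - 1) := by omega
  have ht1 : 1 ≤ t := lt_ceilDiv (by omega) (by omega)
  have hAne : ∀ a : KGPVertex n k l P, a.1.Nonempty := fun a =>
    Finset.card_pos.mp (by rw [a.2.1]; omega)
  set g : KGPVertex n k l P → ℕ := fun a => (a.1.min' (hAne a) : ℕ) with hg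
  refine ⟨fun a => ⟨min (g a / (r - 1)) (t - 1), by omega⟩, ?_⟩
  intro e he
  obtain ⟨hcard, hnd, hdisj⟩ := he
  by_contra hcon
  push_neg at hcon
  obtain ⟨a₀, ha₀⟩ := Multiset.exists_mem_of_ne_zero (s := e) (by
    intro h0
    subst h0
    simp at hcard
    omega)
  have hmono : ∀ a ∈ e, min (g a / (r-1)) (t-1) = min (g a₀ / (r-1)) (t-1) := by
    intro a ha
    have := hcon a ha a₀ ha₀
    exact congrArg Fin.val this
  -- g is injective on distinct members of e
  have ginj : ∀ a ∈ e, ∀ b ∈ e, g a = g b → a = b := by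
    intro a ha b hb hgab
    by_contra hne
    have hd := hdisj a ha b hb hne
    have h1 : a.1.min' (hAne a) ∈ a.1 := Finset.min'_mem _ _
    have h2 : b.1.min' (hAne b) ∈ b.1 := Finset.min'_mem _ _
    have : a.1.min' (hAne a) = b.1.min' (hAne b) := Fin.val_injective hgab
    rw [this] at h1
    exact Finset.disjoint_left.mp hd h1 h2
  by_cases hcase : g a₀ / (r - 1) < t - 1
  · -- window case
    have hival : ∀ a ∈ e, g a / (r - 1) = g a₀ / (r - 1) := by
      intro a ha
      have := hmono a ha
      omega
    have hrange : ∀ a ∈ e, g a ∈ Finset.Ico ((g a₀ / (r-1)) * (r-1)) ((g a₀ / (r-1)) * (r-1) + (r-1)) := by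
      intro a ha
      have h1 := hival a ha
      have h2 : (g a₀ / (r-1)) * (r-1) ≤ g a := by
        rw [← h1]; exact Nat.div_mul_le_self _ _
      have h3 : g a < (g a₀ / (r-1) + 1) * (r-1) := by
        have h4 : g a / (r-1) < g a₀ / (r-1) + 1 := by omega
        exact (Nat.div_lt_iff_lt_mul (show 0 < r - 1 by omega)).mp h4
      simp only [Finset.mem_Ico]
      have h5 : (g a₀ / (r-1) + 1) * (r-1) = (g a₀ / (r-1)) * (r-1) + (r-1) := by ring
      constructor
      · exact h2
      · omega
    have hmapnd : (e.map g).Nodup := Multiset.Nodup.map_on ginj hnd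
    have hsub2 : (e.map g).toFinset ⊆ Finset.Ico ((g a₀ / (r-1)) * (r-1)) ((g a₀ / (r-1)) * (r-1) + (r-1)) := by
      intro x hx
      rw [Multiset.mem_toFinset, Multiset.mem_map] at hx
      obtain ⟨a, ha, rfl⟩ := hx
      exact hrange a ha
    have hc1 : (e.map g).toFinset.card = r := by
      rw [Multiset.toFinset_card_of_nodup hmapnd, Multiset.card_map, hcard]
    have hc2 := Finset.card_le_card hsub2
    rw [hc1, Nat.card_Ico] at hc2
    omega
  · -- last color case
    have hival : ∀ a ∈ e, t - 1 ≤ g a / (r - 1) := by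
      intro a ha
      have := hmono a ha
      omega
    set T : Finset (Fin n) := univ.filter (fun x : Fin n => (t-1) * (r-1) ≤ (x : ℕ)) with hT
    have hsubT : ∀ a ∈ e, a.1 ⊆ T := by
      intro a ha x hx
      have h1 := hival a ha
      have h2 : (t-1) * (r-1) ≤ g a :=
        le_trans (Nat.mul_le_mul_right _ h1) (Nat.div_mul_le_self _ _)
      have h3 : g a ≤ (x : ℕ) := by
        have := Finset.min'_le a.1 x hx
        exact_mod_cast this
      rw [hT]; simp; omega
    have hTcard : T.card ≤ n - (t-1) * (r-1) := by
      have : T.card = (T.image Fin.val).card := (Finset.card_image_of_injective _ Fin.val_injective).symm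
      rw [this]
      have hsub3 : T.image Fin.val ⊆ Finset.Ico ((t-1)*(r-1)) n := by
        intro x hx
        rw [Finset.mem_image] at hx
        obtain ⟨y, hy, rfl⟩ := hx
        rw [hT] at hy; simp only [mem_filter, mem_univ, true_and] at hy
        simp only [Finset.mem_Ico]
        exact ⟨hy, y.isLt⟩
      have := Finset.card_le_card hsub3
      rwa [Nat.card_Ico] at this
    set es : Multiset (Finset (Fin n)) := e.map (fun a => a.1) with hes
    have hesnd : es.Nodup := Multiset.Nodup.map_on
      (fun a _ b _ h => Subtype.ext h) hnd
    have hsum : (es.map Finset.card).sum = r * k := by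
      have : es.map Finset.card = Multiset.replicate r k := by
        apply Multiset.eq_replicate.mpr
        constructor
        · rw [Multiset.card_map, hes, Multiset.card_map, hcard]
        · intro x hx
          rw [Multiset.mem_map] at hx
          obtain ⟨A, hA, rfl⟩ := hx
          rw [hes] at hA
          rw [Multiset.mem_map] at hA
          obtain ⟨a, _, rfl⟩ := hA
          exact a.2.1
      rw [this, Multiset.sum_replicate, smul_eq_mul]
    have hle := sum_card_le es T
      (by intro A hA; rw [hes, Multiset.mem_map] at hA; obtain ⟨a, ha, rfl⟩ := hA; exact hsubT a ha)
      (by intro A hA B hB hAB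
          rw [hes, Multiset.mem_map] at hA hB
          obtain ⟨a, ha, rfl⟩ := hA; obtain ⟨b, hb, rfl⟩ := hB
          exact hdisj a ha b hb (fun h => hAB (congrArg _ h)))
      hesnd
    rw [hsum] at hle
    -- arithmetic contradiction
    have harith : n ≤ r * (k-1) + (r-1) * t := by
      have hcg := ceilDiv_mul_ge (M := n - r*(k-1)) (a := r - 1) (by omega)
      rw [← ht] at hcg
      omega
    have he1 : (t-1) * (r-1) = t * (r-1) - (r-1) := by rw [Nat.sub_one_mul]
    have he2 : (r-1) * t = t * (r-1) := Nat.mul_comm _ _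
    have he3 : r - 1 ≤ t * (r-1) := by nlinarith
    omega

lemma exists_vertex {n k l r : ℕ} (P : Fin l → Finset (Fin n)) (hP : IsPartition n l P)
    (hblocks : ∀ j, (P j).card ≤ r) (hr : 1 ≤ r) (hn : r * k ≤ n) :
    Nonempty (KGPVertex n k l P) := by
  classical
  have huniq : ∀ (a : Fin n) (j j' : Fin l), a ∈ P j → a ∈ P j' → j = j' := by
    intro a j j' hj hj'
    obtain ⟨j0, _, hu⟩ := hP.2 a
    rw [hu j hj, hu j' hj']
  have hln : n ≤ l * r := by
    have h1 : (univ : Finset (Fin n)) ⊆ univ.biUnion P := by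
      intro x _
      obtain ⟨j, hj, _⟩ := hP.2 x
      exact mem_biUnion.mpr ⟨j, mem_univ j, hj⟩
    have h2 := card_le_card h1
    have h3 := card_biUnion_le (s := (univ : Finset (Fin l))) (t := P)
    have h4 : ∑ j, (P j).card ≤ l * r := by
      calc ∑ j : Fin l, (P j).card ≤ ∑ j : Fin l, r := sum_le_sum (fun j _ => hblocks j)
      _ = l * r := by simp [mul_comm]
    simp only [card_univ, Fintype.card_fin] at h2
    omega
  have hkl : k ≤ l := by
    have h5 : r * k ≤ r * l := by rw [mul_comm r l]; omega
    exact Nat.le_of_mul_le_mul_left h5 (by omega)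
  set x : Fin l → Fin n := fun j => (hP.1 j).choose with hx
  have hxmem : ∀ j, x j ∈ P j := fun j => (hP.1 j).choose_spec
  set A : Finset (Fin n) := Finset.image (fun i : Fin k => x (Fin.castLE hkl i)) univ with hA
  have hxinj : Function.Injective (fun i : Fin k => x (Fin.castLE hkl i)) := by
    intro i i' h
    simp only at h
    have h1 : x (Fin.castLE hkl i) ∈ P (Fin.castLE hkl i') := by rw [h]; exact hxmem _
    have := huniq _ _ _ (hxmem (Fin.castLE hkl i)) h1
    exact Fin.castLE_injective hkl this
  refine ⟨⟨A, ?_, ?_⟩⟩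
  · rw [hA, card_image_of_injective _ hxinj, card_univ, Fintype.card_fin]
  · intro j
    apply card_le_one.mpr
    intro a ha b hb
    rw [mem_inter, hA, mem_image] at ha hb
    obtain ⟨⟨i, _, rfl⟩, haj⟩ := ha
    obtain ⟨⟨i', _, rfl⟩, hbj⟩ := hb
    have e1 := huniq _ _ _ haj (hxmem (Fin.castLE hkl i))
    have e2 := huniq _ _ _ hbj (hxmem (Fin.castLE hkl i'))
    rw [← e1, ← e2]

lemma chunk_partition {n l r₁ r₂ : ℕ} (P : Fin l → Finset (Fin n)) (hP : IsPartition n l P)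
    (hblocks : ∀ j, (P j).card ≤ r₁ * r₂) (h₁ : 1 ≤ r₁) (h₂ : 1 ≤ r₂) :
    ∃ (l' : ℕ) (Q : Fin l' → Finset (Fin n)), IsPartition n l' Q ∧ (∀ m, (Q m).card ≤ r₁) ∧
      ∀ (B : Finset (Fin n)), (∀ m, (B ∩ Q m).card ≤ 1) → ∀ j, (B ∩ P j).card ≤ r₂ := by
  classical
  set jx : Fin n → Fin l := fun a => (hP.2 a).exists.choose with hjx
  have hjmem : ∀ a, a ∈ P (jx a) := fun a => (hP.2 a).exists.choose_spec
  have hjuniq : ∀ (a : Fin n) (j : Fin l), a ∈ P j → jx a = j := by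
    intro a j hj
    obtain ⟨j0, _, hu⟩ := hP.2 a
    rw [hu _ (hjmem a), hu _ hj]
  set rank : Fin n → ℕ := fun a => ((P (jx a)).filter (fun y => y < a)).card with hrank
  have hrank_lt : ∀ a, rank a < (P (jx a)).card := by
    intro a
    apply card_lt_card
    constructor
    · exact filter_subset _ _
    · intro hsub
      have := hsub (hjmem a)
      rw [mem_filter] at this
      exact absurd this.2 (lt_irrefl a)
  have hrank_inj : ∀ a b : Fin n, jx a = jx b → rank a = rank b → a = b := by
    intro a b hj hr
    rcases lt_trichotomy a b with h | h | h
    · exfalso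
      have hsub : (P (jx a)).filter (fun y => y < a) ⊂ (P (jx a)).filter (fun y => y < b) := by
        constructor
        · intro y hy
          rw [mem_filter] at hy ⊢
          exact ⟨hy.1, hy.2.trans h⟩
        · intro hsub'
          have : a ∈ (P (jx a)).filter (fun y => y < b) := mem_filter.mpr ⟨hjmem a, h⟩
          have := hsub' this
          rw [mem_filter] at this
          exact absurd this.2 (lt_irrefl a)
      have hlt := card_lt_card hsub
      have e1 : rank a = #(filter (fun y => y < a) (P (jx a))) := rfl
      have e2 : rank b = #(filter (fun y => y < b) (P (jx a))) := by
        rw [show rank b = #(filter (fun y => y < b) (P (jx b))) from rfl, hj]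
      omega
    · exact h
    · exfalso
      have hsub : (P (jx a)).filter (fun y => y < b) ⊂ (P (jx a)).filter (fun y => y < a) := by
        constructor
        · intro y hy
          rw [mem_filter] at hy ⊢
          exact ⟨hy.1, hy.2.trans h⟩
        · intro hsub'
          have hbm : b ∈ (P (jx a)).filter (fun y => y < a) := mem_filter.mpr ⟨hj ▸ hjmem b, h⟩
          have := hsub' hbm
          rw [mem_filter] at this
          exact absurd this.2 (lt_irrefl b)
      have hlt := card_lt_card hsub
      have e1 : rank a = #(filter (fun y => y < a) (P (jx a))) := rfl
      have e2 : rank b = #(filter (fun y => y < b) (P (jx a))) := by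
        rw [show rank b = #(filter (fun y => y < b) (P (jx b))) from rfl, hj]
      omega
  set key : Fin n → Fin l × ℕ := fun a => (jx a, rank a / r₁) with hkey
  obtain ⟨l', Q, v, hQdef, hQpart⟩ := fiber_partition key
  refine ⟨l', Q, hQpart, ?_, ?_⟩
  · -- blocks of Q have size ≤ r₁
    intro m
    have hsub : ∀ a ∈ Q m, rank a ∈ Finset.Ico ((v m).2 * r₁) ((v m).2 * r₁ + r₁) := by
      intro a ha
      rw [hQdef, mem_filter] at ha
      have h1 : jx a = (v m).1 := congrArg Prod.fst ha.2
      have h2 : rank a / r₁ = (v m).2 := congrArg Prod.snd ha.2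
      rw [mem_Ico]
      constructor
      · calc (v m).2 * r₁ = rank a / r₁ * r₁ := by rw [h2]
        _ ≤ rank a := Nat.div_mul_le_self _ _
      · have h3 : rank a / r₁ < (v m).2 + 1 := by omega
        have := (Nat.div_lt_iff_lt_mul (show 0 < r₁ by omega)).mp h3
        nlinarith
    have hinj : Set.InjOn rank (Q m) := by
      intro a ha b hb hab
      rw [mem_coe, hQdef, mem_filter] at ha hb
      have : jx a = jx b := by
        have h1 : jx a = (v m).1 := congrArg Prod.fst ha.2
        have h2 : jx b = (v m).1 := congrArg Prod.fst hb.2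
        rw [h1, h2]
      exact hrank_inj a b this hab
    have := card_le_card_of_injOn rank (fun a ha => hsub a ha) hinj
    rwa [Nat.card_Ico, Nat.add_sub_cancel_left] at this
  · -- the bound on B ∩ P j
    intro B hB j
    have hmaps : ∀ a ∈ B ∩ P j, rank a / r₁ ∈ Finset.range r₂ := by
      intro a ha
      rw [mem_inter] at ha
      have hja : jx a = j := hjuniq a j ha.2
      have h1 : rank a < r₁ * r₂ := lt_of_lt_of_le (hrank_lt a) (by rw [hja]; exact hblocks j)
      rw [mem_range]
      exact (Nat.div_lt_iff_lt_mul (show 0 < r₁ by omega)).mpr (by nlinarith)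
    rw [card_eq_sum_card_fiberwise hmaps]
    calc ∑ q ∈ Finset.range r₂, ((B ∩ P j).filter (fun a => rank a / r₁ = q)).card
        ≤ ∑ _q ∈ Finset.range r₂, 1 := by
          apply sum_le_sum
          intro q _
          -- each fiber is contained in B ∩ Q m for the appropriate m
          rcases ((B ∩ P j).filter (fun a => rank a / r₁ = q)).eq_empty_or_nonempty with he | ⟨a, ha⟩
          · rw [he]; simp
          · obtain ⟨m, hm, _⟩ := hQpart.2 a
            have hva : v m = key a := by
              rw [hQdef, mem_filter] at hm
              exact hm.2.symm
            have hsubm : (B ∩ P j).filter (fun b => rank b / r₁ = q) ⊆ B ∩ Q m := by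
              intro b hb
              rw [mem_filter, mem_inter] at hb
              rw [mem_filter, mem_inter] at ha
              rw [mem_inter]
              refine ⟨hb.1.1, ?_⟩
              rw [hQdef, mem_filter]
              refine ⟨mem_univ b, ?_⟩
              rw [hva, hkey]
              have : jx b = j := hjuniq b j hb.1.2
              have ha2 : jx a = j := hjuniq a j ha.1.2
              simp only [Prod.mk.injEq]
              exact ⟨by rw [this, ha2], by rw [hb.2, ha.2]⟩
            calc ((B ∩ P j).filter (fun b => rank b / r₁ = q)).card ≤ (B ∩ Q m).card :=
                card_le_card hsubm
            _ ≤ 1 := hB m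
    _ = r₂ := by simp

lemma inner_family {n k l r₂ C : ℕ} {P : Fin l → Finset (Fin n)} (hP : IsPartition n l P)
    (H₂ : ErdosKneserProperty r₂) (hr₂ : 1 ≤ r₂) (hk : 1 ≤ k)
    (c : KGPVertex n k l P → Fin C)
    (B : Finset (Fin n)) {K : ℕ} (hBcard : B.card = K)
    (hBmeet : ∀ j, (B ∩ P j).card ≤ r₂)
    (hKk : r₂ * k ≤ K) (hCT : C < (K - r₂ * (k - 1)) ⌈/⌉ (r₂ - 1)) :
    ∃ (m : Multiset (KGPVertex n k l P)) (α : Fin C),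
      Multiset.card m = r₂ ∧ m.Nodup ∧ (∀ a ∈ m, a.1 ⊆ B) ∧
      (∀ a ∈ m, ∀ b ∈ m, a ≠ b → Disjoint a.1 b.1) ∧ (∀ a ∈ m, c a = α) := by
  classical
  set f : Fin K → Fin n := fun i => (B.equivFin.symm (Fin.cast hBcard.symm i) : Fin n) with hf
  have hfmem : ∀ i, f i ∈ B := fun i => (B.equivFin.symm (Fin.cast hBcard.symm i)).2
  have hfinj : Function.Injective f := by
    intro i i' h
    have h2 : B.equivFin.symm (Fin.cast hBcard.symm i) = B.equivFin.symm (Fin.cast hBcard.symm i') :=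
      Subtype.ext h
    have h3 := B.equivFin.symm.injective h2
    exact (Fin.cast_injective _) h3
  set g : Fin K → Fin l := fun i => (hP.2 (f i)).exists.choose with hg
  have hgmem : ∀ i, f i ∈ P (g i) := fun i => (hP.2 (f i)).exists.choose_spec
  have hguniq : ∀ (i : Fin K) (j : Fin l), f i ∈ P j → g i = j := by
    intro i j hj
    obtain ⟨j0, _, hu⟩ := hP.2 (f i)
    rw [hu _ (hgmem i), hu _ hj]
  obtain ⟨l'', Pb, v, hPbdef, hPbpart⟩ := fiber_partition g
  have hPbsize : ∀ m, (Pb m).card ≤ r₂ := by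
    intro m
    have hmaps : ∀ i ∈ Pb m, f i ∈ B ∩ P (v m) := by
      intro i hi
      rw [hPbdef, mem_filter] at hi
      exact mem_inter.mpr ⟨hfmem i, hi.2 ▸ hgmem i⟩
    have := card_le_card_of_injOn f hmaps (fun a _ b _ h => hfinj h)
    exact this.trans (hBmeet (v m))
  -- the vertex map
  have hΦprop : ∀ S : KGPVertex K k l'' Pb, (S.1.image f).card = k ∧
      ∀ j, ((S.1.image f) ∩ P j).card ≤ 1 := by
    intro S
    refine ⟨by rw [card_image_of_injective _ hfinj, S.2.1], ?_⟩
    intro j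
    apply card_le_one.mpr
    intro a ha b hb
    rw [mem_inter, mem_image] at ha hb
    obtain ⟨⟨i, hiS, rfl⟩, haj⟩ := ha
    obtain ⟨⟨i', hiS', rfl⟩, hbj⟩ := hb
    have h1 : g i = j := hguniq i j haj
    have h2 : g i' = j := hguniq i' j hbj
    obtain ⟨m, hm, _⟩ := hPbpart.2 i
    have hvm : v m = g i := by
      rw [hPbdef, mem_filter] at hm
      exact hm.2.symm
    have hi'm : i' ∈ Pb m := by
      rw [hPbdef, mem_filter]
      exact ⟨mem_univ _, by rw [hvm, h1, h2]⟩
    have him : i ∈ Pb m := hm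
    have : i = i' := by
      have hcard1 := S.2.2 m
      have hi1 : i ∈ S.1 ∩ Pb m := mem_inter.mpr ⟨hiS, him⟩
      have hi2 : i' ∈ S.1 ∩ Pb m := mem_inter.mpr ⟨hiS', hi'm⟩
      exact card_le_one.mp hcard1 i hi1 i' hi2
    rw [this]
  set Φ : KGPVertex K k l'' Pb → KGPVertex n k l P :=
    fun S => ⟨S.1.image f, hΦprop S⟩ with hΦ
  have hΦinj : Function.Injective Φ := by
    intro S S' h
    have h1 : S.1.image f = S'.1.image f := congrArg Subtype.val h
    exact Subtype.ext (Finset.image_injective hfinj h1)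
  have hinner := H₂ K k l'' Pb hk hKk hPbpart hPbsize
  obtain ⟨e'', he''E, hmonoc⟩ := improper_of_lt hinner hCT (fun S => c (Φ S))
  obtain ⟨hcard'', hnd'', hdisj''⟩ := he''E
  have hne'' : e'' ≠ 0 := by
    intro h0
    rw [h0] at hcard''
    simp at hcard''
    omega
  obtain ⟨S₀, hS₀⟩ := Multiset.exists_mem_of_ne_zero hne''
  refine ⟨e''.map Φ, c (Φ S₀), ?_, ?_, ?_, ?_, ?_⟩
  · rw [Multiset.card_map, hcard'']
  · exact Multiset.Nodup.map_on (fun a _ b _ h => hΦinj h) hnd''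
  · intro a ha
    rw [Multiset.mem_map] at ha
    obtain ⟨S, _, rfl⟩ := ha
    intro x hx
    rw [hΦ] at hx
    simp only [mem_image] at hx
    obtain ⟨i, _, rfl⟩ := hx
    exact hfmem i
  · intro a ha b hb hab
    rw [Multiset.mem_map] at ha hb
    obtain ⟨S, hS, rfl⟩ := ha
    obtain ⟨S', hS', rfl⟩ := hb
    have hSS' : S ≠ S' := fun h => hab (congrArg Φ h)
    have hd := hdisj'' S hS S' hS' hSS'
    rw [hΦ]
    exact (Finset.disjoint_image hfinj).mpr hd
  · intro a ha
    rw [Multiset.mem_map] at ha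
    obtain ⟨S, hS, rfl⟩ := ha
    exact hmonoc S hS S₀ hS₀

theorem erdosKneser_mul (r₁ r₂ : ℕ) (h₁ : 2 ≤ r₁) (h₂ : 2 ≤ r₂)
    (H₁ : ErdosKneserProperty r₁) (H₂ : ErdosKneserProperty r₂) :
    ErdosKneserProperty (r₁ * r₂) := by
  intro n k l P hk hn hPart hPblocks
  classical
  have hr2 : 2 ≤ r₁ * r₂ := by nlinarith
  obtain ⟨c₀, hc₀⟩ := upper_coloring (r₁ * r₂) n k l P hr2 hk hn
  apply le_antisymm (hyp_le c₀ hc₀)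
  apply le_sInf
  rintro N ⟨C, rfl, c, hcprop⟩
  rw [Nat.cast_le]
  by_contra hlt
  push_neg at hlt
  -- C ≥ 1
  have hCpos : 1 ≤ C := by
    by_contra hc0
    push_neg at hc0
    interval_cases C
    exact ((c (exists_vertex P hPart hPblocks (by omega) hn).some)).elim0
  -- basic product identities
  have hrk : r₁ * r₂ * (k - 1) + r₁ * r₂ = r₁ * r₂ * k := by
    have hk1 : k - 1 + 1 = k := by omega
    calc r₁ * r₂ * (k - 1) + r₁ * r₂ = r₁ * r₂ * ((k - 1) + 1) := by ring
    _ = r₁ * r₂ * k := by rw [hk1]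
  have hX : r₁ * r₂ * (k - 1) + (r₁ * r₂ - 1) * C < n := by
    have h0 : ¬ ((n - r₁ * r₂ * (k - 1)) ⌈/⌉ (r₁ * r₂ - 1) ≤ C) := by omega
    have h1 : ¬ (n - r₁ * r₂ * (k - 1) ≤ (r₁ * r₂ - 1) * C) := fun h =>
      h0 ((ceilDiv_le_iff_le_mul (show (0:ℕ) < r₁ * r₂ - 1 by omega)).mpr h)
    push_neg at h1
    omega
  set K := r₂ * (k - 1) + C * (r₂ - 1) + 1 with hK
  have hwk2 : r₂ * (k - 1) + r₂ = r₂ * k := by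
    have hk1 : k - 1 + 1 = k := by omega
    calc r₂ * (k - 1) + r₂ = r₂ * ((k - 1) + 1) := by ring
    _ = r₂ * k := by rw [hk1]
  have hmul1 : 1 * (r₂ - 1) ≤ C * (r₂ - 1) := Nat.mul_le_mul_right _ hCpos
  have hr₂K : r₂ * k ≤ K := by omega
  have hCT₂ : C < (K - r₂ * (k - 1)) ⌈/⌉ (r₂ - 1) := by
    apply lt_ceilDiv (by omega)
    have : (r₂ - 1) * C = C * (r₂ - 1) := Nat.mul_comm _ _
    omega
  -- identity: (r₁*r₂ - 1)*C = r₁*(C*(r₂-1)) + (r₁-1)*C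
  have hid : (r₁ * r₂ - 1) * C = r₁ * (C * (r₂ - 1)) + (r₁ - 1) * C := by
    zify [show (1:ℕ) ≤ r₁ * r₂ by omega, show (1:ℕ) ≤ r₂ by omega, show (1:ℕ) ≤ r₁ by omega]
    ring
  have hKsub : K - 1 = r₂ * (k - 1) + C * (r₂ - 1) := by omega
  have hr₁Kexp : r₁ * (K - 1) = r₁ * r₂ * (k - 1) + r₁ * (C * (r₂ - 1)) := by
    rw [hKsub]; ring
  have hmul2 : 1 * (r₁ - 1) ≤ C * (r₁ - 1) := Nat.mul_le_mul_right _ hCpos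
  have hmul2' : C * (r₁ - 1) = (r₁ - 1) * C := Nat.mul_comm _ _
  have hr₁K : r₁ * K ≤ n := by
    have hK1 : K - 1 + 1 = K := by omega
    have e4 : r₁ * K = r₁ * (K - 1) + r₁ := by
      calc r₁ * K = r₁ * ((K - 1) + 1) := by rw [hK1]
      _ = r₁ * (K - 1) + r₁ := by ring
    omega
  have hCT₁ : C < (n - r₁ * (K - 1)) ⌈/⌉ (r₁ - 1) := by
    apply lt_ceilDiv (by omega)
    have : (r₁ - 1) * C = C * (r₁ - 1) := Nat.mul_comm _ _
    omega
  -- chunk partition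
  obtain ⟨l', Q, hQpart, hQsize, hQbound⟩ := chunk_partition P hPart hPblocks (by omega) (by omega)
  have houter := H₁ n K l' Q (by omega) hr₁K hQpart hQsize
  have hfam : ∀ Bv : KGPVertex n K l' Q, ∃ (m : Multiset (KGPVertex n k l P)) (α : Fin C),
      Multiset.card m = r₂ ∧ m.Nodup ∧ (∀ a ∈ m, a.1 ⊆ Bv.1) ∧
      (∀ a ∈ m, ∀ b ∈ m, a ≠ b → Disjoint a.1 b.1) ∧ (∀ a ∈ m, c a = α) :=
    fun Bv => inner_family hPart H₂ (by omega) hk c Bv.1 Bv.2.1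
      (fun j => hQbound Bv.1 Bv.2.2 j) hr₂K hCT₂
  set fam : KGPVertex n K l' Q → Multiset (KGPVertex n k l P) :=
    fun Bv => (hfam Bv).choose with hfamdef
  set dcol : KGPVertex n K l' Q → Fin C := fun Bv => (hfam Bv).choose_spec.choose with hdcol
  have hfamprop : ∀ Bv, Multiset.card (fam Bv) = r₂ ∧ (fam Bv).Nodup ∧
      (∀ a ∈ fam Bv, a.1 ⊆ Bv.1) ∧
      (∀ a ∈ fam Bv, ∀ b ∈ fam Bv, a ≠ b → Disjoint a.1 b.1) ∧
      (∀ a ∈ fam Bv, c a = dcol Bv) := fun Bv => (hfam Bv).choose_spec.choose_spec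
  obtain ⟨e₁, he₁E, hmono₁⟩ := improper_of_lt houter hCT₁ dcol
  obtain ⟨hc₁, hnd₁, hdisj₁⟩ := he₁E
  set big := e₁.bind fam with hbig
  have hbigcard : Multiset.card big = r₁ * r₂ := by
    rw [hbig, Multiset.card_bind]
    have : e₁.map (Multiset.card ∘ fam) = Multiset.replicate r₁ r₂ := by
      apply Multiset.eq_replicate.mpr
      refine ⟨by rw [Multiset.card_map, hc₁], ?_⟩
      intro x hx
      rw [Multiset.mem_map] at hx
      obtain ⟨Bv, _, rfl⟩ := hx
      exact (hfamprop Bv).1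
    rw [this, Multiset.sum_replicate, smul_eq_mul]
  have hvne : ∀ (a : KGPVertex n k l P), a.1.Nonempty := fun a =>
    Finset.card_pos.mp (by rw [a.2.1]; omega)
  have hfamdisj : ∀ Bva ∈ e₁, ∀ Bvb ∈ e₁, Bva ≠ Bvb →
      Disjoint (fam Bva) (fam Bvb) := by
    intro Bva hma Bvb hmb hne
    rw [Multiset.disjoint_left]
    intro x hxa hxb
    have h1 := (hfamprop Bva).2.2.1 x hxa
    have h2 := (hfamprop Bvb).2.2.1 x hxb
    have hd := hdisj₁ Bva hma Bvb hmb hne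
    have : x.1 = ∅ := by
      have := Finset.disjoint_left.mp hd
      ext y
      simp only [Finset.notMem_empty, iff_false]
      intro hy
      exact this (h1 hy) (h2 hy)
    exact absurd this (Finset.nonempty_iff_ne_empty.mp (hvne x))
  have hbignd : big.Nodup := by
    rw [hbig]
    rw [Multiset.nodup_bind]
    refine ⟨fun Bv _ => (hfamprop Bv).2.1, ?_⟩
    exact Multiset.Nodup.pairwise (fun a ha b hb hne => hfamdisj a ha b hb hne) hnd₁
  have hbigdisj : ∀ a ∈ big, ∀ b ∈ big, a ≠ b → Disjoint a.1 b.1 := by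
    intro a ha b hb hne
    rw [hbig, Multiset.mem_bind] at ha hb
    obtain ⟨Bva, hma, hfa⟩ := ha
    obtain ⟨Bvb, hmb, hfb⟩ := hb
    by_cases hBv : Bva = Bvb
    · subst hBv
      exact (hfamprop Bva).2.2.2.1 a hfa b hfb hne
    · have hd := hdisj₁ Bva hma Bvb hmb hBv
      have h1 := (hfamprop Bva).2.2.1 a hfa
      have h2 := (hfamprop Bvb).2.2.1 b hfb
      exact Finset.disjoint_of_subset_left h1 (Finset.disjoint_of_subset_right h2 hd)
  obtain ⟨a, ha, b, hb, hneq⟩ := hcprop big ⟨hbigcard, hbignd, hbigdisj⟩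
  apply hneq
  rw [hbig, Multiset.mem_bind] at ha hb
  obtain ⟨Bva, hma, hfa⟩ := ha
  obtain ⟨Bvb, hmb, hfb⟩ := hb
  calc c a = dcol Bva := (hfamprop Bva).2.2.2.2 a hfa
  _ = dcol Bvb := hmono₁ Bva hma Bvb hmb
  _ = c b := ((hfamprop Bvb).2.2.2.2 b hfb).symm
end

section
/- Let r ≥ 1, k ≥ 0, and let s : [n] → {0,...,r}. The complex C_s(n,k,...,k) (k repeated r times) is non-empty if and only if s(1) + ... + s(n) ≥ rk. Equivalently: there exist subsets A_1,...,A_r of [n] with |A_i| ≥ k for each i and such that each x ∈ [n] belongs to exactly s(x) of the sets A_1,...,A_r, if and only if s(1)+...+s(n) ≥ rk. -/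
open Finset

/-- Two numbers in a window of length `≤ r` with equal residues mod `r` are equal. -/
lemma mod_inj_window {r a c m1 m2 : ℕ} (hc : c ≤ r)
    (h1 : m1 ∈ Finset.Ico a (a + c)) (h2 : m2 ∈ Finset.Ico a (a + c))
    (h : m1 % r = m2 % r) : m1 = m2 := by
  simp only [Finset.mem_Ico] at h1 h2
  rcases le_total m1 m2 with hle | hle
  · have hd : r ∣ m2 - m1 := (Nat.modEq_iff_dvd' hle).mp h
    have : m2 - m1 < r := by omega
    have := Nat.eq_zero_of_dvd_of_lt hd this
    omega
  · have hd : r ∣ m1 - m2 := (Nat.modEq_iff_dvd' hle).mp h.symm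
    have : m1 - m2 < r := by omega
    have := Nat.eq_zero_of_dvd_of_lt hd this
    omega

/-- A window of length `c ≤ r` hits exactly `c` residue classes mod `r`. -/
lemma card_filter_mod (r a c : ℕ) (hr : 0 < r) (hc : c ≤ r) :
    (Finset.univ.filter
      (fun i : Fin r => ∃ m, m ∈ Finset.Ico a (a + c) ∧ m % r = i.val)).card = c := by
  have hset : (Finset.univ.filter
      (fun i : Fin r => ∃ m, m ∈ Finset.Ico a (a + c) ∧ m % r = i.val)) =
      (Finset.Ico a (a + c)).image (fun m => (⟨m % r, Nat.mod_lt _ hr⟩ : Fin r)) := by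
    ext i
    simp only [Finset.mem_filter, Finset.mem_univ, true_and, Finset.mem_image,
      Fin.ext_iff]
  have hinj : Set.InjOn (fun m => (⟨m % r, Nat.mod_lt _ hr⟩ : Fin r))
      (Finset.Ico a (a + c)) := by
    intro m1 h1 m2 h2 heq
    simp only [Fin.mk.injEq] at heq
    exact mod_inj_window hc h1 h2 heq
  rw [hset, Finset.card_image_of_injOn hinj, Nat.card_Ico]
  omega

/-- The complex `C_s(n,k,…,k)` (`k` repeated `r` times) is non-empty iff
`s(1) + ⋯ + s(n) ≥ rk`: there exist sets `A_1, …, A_r ⊆ [n]` with `|A_i| ≥ k` such that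
each `x` lies in exactly `s x` of them, iff `∑ s ≥ rk`. -/
theorem Cs_nonempty_iff (n r k : ℕ) (s : Fin n → ℕ)
    (hr : 1 ≤ r) (hs : ∀ x, s x ≤ r) :
    (∃ A : Fin r → Finset (Fin n),
        (∀ i, k ≤ (A i).card) ∧
        (∀ x : Fin n, (Finset.univ.filter (fun i => x ∈ A i)).card = s x)) ↔
      r * k ≤ ∑ x, s x := by
  constructor
  · rintro ⟨A, hk, hcard⟩
    have key : ∑ i : Fin r, (A i).card = ∑ x, s x := by
      have h1 : ∀ i : Fin r, (A i).card =
          ∑ x : Fin n, if x ∈ A i then 1 else 0 := fun i => by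
        rw [← Finset.sum_filter, Finset.sum_const, smul_eq_mul, mul_one,
          Finset.filter_univ_mem]
      simp_rw [h1]
      rw [Finset.sum_comm]
      refine Finset.sum_congr rfl fun x _ => ?_
      rw [← hcard x, ← Finset.sum_filter, Finset.sum_const, smul_eq_mul, mul_one]
    calc r * k = ∑ _i : Fin r, k := by simp [mul_comm]
    _ ≤ ∑ i : Fin r, (A i).card := Finset.sum_le_sum fun i _ => hk i
    _ = ∑ x, s x := key
  · intro hsum
    have hr0 : 0 < r := hr
    set f : ℕ → ℕ := fun j => if h : j < n then s ⟨j, h⟩ else 0 with hf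
    set T : ℕ → ℕ := fun j => ∑ i ∈ Finset.range j, f i with hT
    have hfx : ∀ x : Fin n, f x.val = s x := fun x => by simp [hf, x.isLt]
    have hTn : T n = ∑ x, s x := by
      show (∑ i ∈ Finset.range n, f i) = ∑ x, s x
      rw [← Fin.sum_univ_eq_sum_range f n]
      exact Finset.sum_congr rfl fun x _ => hfx x
    have hTsucc : ∀ x : Fin n, T (x.val + 1) = T x.val + s x := fun x => by
      rw [hT]; simp only [Finset.sum_range_succ]; rw [hfx x]
    have hTmono : Monotone T := by
      intro a b hab
      exact Finset.sum_le_sum_of_subset (Finset.range_subset_range.mpr hab)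
    -- locate each position m < T n inside an interval
    have hloc : ∀ m, m < T n → ∃ x : Fin n, T x.val ≤ m ∧ m < T x.val + s x := by
      intro m hm
      set j := Nat.findGreatest (fun j => T j ≤ m) n with hj
      have hj0 : T 0 ≤ m := Nat.zero_le m
      have hjle : j ≤ n := Nat.findGreatest_le n
      have hjP : T j ≤ m :=
        Nat.findGreatest_spec (P := fun a => T a ≤ m) (Nat.zero_le n) hj0
      have hjn : j < n := by
        rcases lt_or_eq_of_le hjle with h | h
        · exact h
        · exfalso; rw [h] at hjP; omega
      have hgt : ¬ T (j + 1) ≤ m :=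
        Nat.findGreatest_is_greatest (P := fun a => T a ≤ m) (n := n)
          (Nat.lt_succ_self j) hjn
      refine ⟨⟨j, hjn⟩, hjP, ?_⟩
      have := hTsucc ⟨j, hjn⟩
      simp only [Fin.val_mk] at this ⊢
      omega
    -- the sets
    set A : Fin r → Finset (Fin n) := fun i => Finset.univ.filter
      (fun x => ∃ m, m ∈ Finset.Ico (T x.val) (T x.val + s x) ∧ m % r = i.val)
      with hA
    refine ⟨A, ?_, ?_⟩
    · intro i
      rcases Nat.eq_zero_or_pos k with hk0 | hk0
      · simp [hk0]
      have hn0 : 0 < n := by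
        rcases Nat.eq_zero_or_pos n with h0 | h0
        · exfalso; subst h0; simp at hsum; omega
        · exact h0
      -- total locator
      have hloc' : ∀ m : ℕ, m < T n → {x : Fin n // T x.val ≤ m ∧ m < T x.val + s x} := by
        intro m hm
        exact ⟨(hloc m hm).choose, (hloc m hm).choose_spec⟩
      set g : ℕ → Fin n := fun j =>
        if h : i.val + j * r < T n then (hloc' _ h).1 else ⟨0, hn0⟩ with hg
      have hmlt : ∀ j, j < k → i.val + j * r < T n := by
        intro j hjk
        have h1 : i.val + j * r < r + j * r := by omega
        have h2 : r + j * r = (j + 1) * r := by ring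
        have h3 : (j + 1) * r ≤ k * r := Nat.mul_le_mul_right r (by omega)
        rw [hTn]; rw [mul_comm] at hsum; omega
      have hgspec : ∀ j, j < k → T (g j).val ≤ i.val + j * r ∧
          i.val + j * r < T (g j).val + s (g j) := by
        intro j hjk
        rw [hg]
        simp only [hmlt j hjk, dif_pos]
        exact (hloc' _ (hmlt j hjk)).2
      have := Finset.card_le_card_of_injOn g
        (fun j hj => ?_) (fun j1 hj1 j2 hj2 heq => ?_) (s := Finset.range k) (t := A i)
      · calc k = (Finset.range k).card := (Finset.card_range k).symm
        _ ≤ (A i).card := this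
      · -- membership
        simp only [Finset.mem_coe, Finset.mem_range] at hj ⊢
        obtain ⟨h1, h2⟩ := hgspec j hj
        rw [hA]
        simp only [Finset.mem_filter, Finset.mem_univ, true_and]
        exact ⟨i.val + j * r, Finset.mem_Ico.mpr ⟨h1, h2⟩, by
          simp [Nat.add_mul_mod_self_right, Nat.mod_eq_of_lt i.isLt]⟩
      · -- injectivity
        simp only [Finset.mem_coe, Finset.mem_range] at hj1 hj2
        by_contra hne
        obtain ⟨ha1, hb1⟩ := hgspec j1 hj1
        obtain ⟨ha2, hb2⟩ := hgspec j2 hj2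
        rw [heq] at ha1 hb1
        have hsle : s (g j2) ≤ r := hs _
        rcases Nat.lt_or_ge j1 j2 with hlt | hge
        · have : j1 * r + r ≤ j2 * r := by
            calc j1 * r + r = (j1 + 1) * r := by ring
            _ ≤ j2 * r := Nat.mul_le_mul_right r hlt
          omega
        · have hlt : j2 < j1 := by omega
          have : j2 * r + r ≤ j1 * r := by
            calc j2 * r + r = (j2 + 1) * r := by ring
            _ ≤ j1 * r := Nat.mul_le_mul_right r hlt
          omega
    · intro x
      have hxA : ∀ i : Fin r, (x ∈ A i) ↔
          ∃ m, m ∈ Finset.Ico (T x.val) (T x.val + s x) ∧ m % r = i.val := by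
        intro i; rw [hA]; simp
      have : (Finset.univ.filter (fun i => x ∈ A i)) =
          (Finset.univ.filter (fun i : Fin r =>
            ∃ m, m ∈ Finset.Ico (T x.val) (T x.val + (s x)) ∧ m % r = i.val)) := by
        apply Finset.filter_congr
        intro i _
        simpa using hxA i
      rw [this, card_filter_mod r (T x.val) (s x) hr0 (hs x)]
end

section
/- Suppose n ≥ rk and every proper coloring uses at least t colors where t = ⌈(n - r(k-1))/(r-1)⌉; then in particular for S = (s,...,s) with s ≥ 1, s n ≥ rk and P = ⌊(r-1)/s⌋, the Erdős-type greedy coloring gives χ(KG^r_S(n,k)) ≤ 1 + ⌈(ns - rk + 1)/(P s)⌉. -/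
open Finset

/-- Double counting incidences between a fixed finset `B` and a multiset of vertices. -/
lemma sum_card_filter_aux {n k : ℕ} (B : Finset (Fin n)) (e : Multiset (KGSVertex n k)) :
    ∑ x ∈ B, (e.filter fun A => x ∈ A.1).card
      = (e.map fun A => (B.filter fun x => x ∈ A.1).card).sum := by
  induction e using Multiset.induction with
  | empty => simp
  | cons A e ih =>
      simp [Multiset.filter_cons, apply_ite Multiset.card, Finset.sum_add_distrib, ih,
        Finset.sum_ite, Finset.card_filter]

lemma card_le_sum_aux (m : Multiset ℕ) (h : ∀ x ∈ m, 1 ≤ x) : Multiset.card m ≤ m.sum := by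
  induction m using Multiset.induction with
  | empty => simp
  | cons a m ih =>
      simp only [Multiset.card_cons, Multiset.sum_cons]
      have h1 := h a (Multiset.mem_cons_self a m)
      have h2 := ih fun x hx => h x (Multiset.mem_cons_of_mem hx)
      omega

/-- Ziegler's Lemma 3.1 via the Erdős-type greedy coloring: for `S = (s,…,s)` with
`1 ≤ s < r` and `ns ≥ rk`, setting `P = ⌊(r-1)/s⌋`, one has
`χ(KG^r_S(n,k)) ≤ 1 + ⌈(ns - rk + 1)/(P s)⌉`. -/
theorem chromatic_KGS_const_le (n k r s : ℕ)
    (hk : 1 ≤ k) (hs : 1 ≤ s) (hsr : s < r) (hsum : r * k ≤ n * s) :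
    hypChromatic (KGSEdges n k r (fun _ => s)) ≤
      ((1 + (n * s - r * k + 1) ⌈/⌉ (((r - 1) / s) * s) : ℕ) : ℕ∞) := by
  classical
  set t₁ := (r * k - 1) / s with ht₁
  set P := (r - 1) / s with hPdef
  set a := n * s - r * k + 1 with hadef
  set t := 1 + a ⌈/⌉ (P * s) with htdef
  have hr2 : 2 ≤ r := by omega
  have hrk2 : 2 ≤ r * k := by nlinarith
  have hP1 : 1 ≤ P := (Nat.one_le_div_iff hs).mpr (by omega)
  have ht0 : 0 < t := by omega
  have ha1 : 1 ≤ a := by omega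
  -- key arithmetic: colors of elements beyond the first block stay below t
  have L1 : ∀ m : ℕ, m < n → t₁ ≤ m → (m - t₁) / P + 1 < t := by
    intro m hmn hm
    have h1 : (m - t₁) / P + 1 ≤ a ⌈/⌉ (P * s) := by
      by_contra hcon
      push_neg at hcon
      have h2 : a ⌈/⌉ (P * s) ≤ (m - t₁) / P := by omega
      have h3 : a ≤ (P * s) * ((m - t₁) / P) :=
        (ceilDiv_le_iff_le_mul (by positivity)).mp h2
      have h3' : a ≤ (m - t₁) * s := by
        calc a ≤ (P * s) * ((m - t₁) / P) := h3
          _ = ((m - t₁) / P * P) * s := by ring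
          _ ≤ (m - t₁) * s := Nat.mul_le_mul_right _ (Nat.div_mul_le_self _ _)
      have h6 : (m - t₁) * s + s * t₁ + s ≤ n * s := by
        have : ((m - t₁) + t₁ + 1) * s ≤ n * s := Nat.mul_le_mul_right _ (by omega)
        calc (m - t₁) * s + s * t₁ + s = ((m - t₁) + t₁ + 1) * s := by ring
          _ ≤ n * s := this
      have h7 := Nat.div_add_mod (r * k - 1) s
      rw [← ht₁] at h7
      have h8 : (r * k - 1) % s < s := Nat.mod_lt _ hs
      have f6 : a = n * s - r * k + 1 := hadef
      omega
    omega
  -- setup the coloring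
  have hk0 : ∀ A : KGSVertex n k, A.1.Nonempty := fun A =>
    Finset.card_pos.mp (by rw [A.2]; omega)
  set g : Fin n → ℕ := fun x => if x.val < t₁ then t else (x.val - t₁) / P + 1 with hg
  have hg_le : ∀ x : Fin n, g x ≤ t := by
    intro x
    by_cases hx : x.val < t₁
    · simp [hg, hx]
    · simp only [hg, hx, if_false]
      exact le_of_lt (L1 x.val x.isLt (by omega))
  have hg_ge : ∀ x : Fin n, 1 ≤ g x := by
    intro x
    by_cases hx : x.val < t₁ <;> simp [hg, hx] <;> omega
  set h : KGSVertex n k → ℕ := fun A => A.1.inf' (hk0 A) g with hh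
  have hhub : ∀ A, h A ≤ t := by
    intro A
    obtain ⟨x, hx⟩ := hk0 A
    exact le_trans (Finset.inf'_le g hx) (hg_le x)
  have hhlb : ∀ A, 1 ≤ h A := by
    intro A
    exact Finset.le_inf' _ _ fun x _ => hg_ge x
  refine sInf_le ⟨t, rfl, fun A => ⟨h A % t, Nat.mod_lt _ ht0⟩, ?_⟩
  intro e he
  obtain ⟨hcard, hdisj⟩ := he
  by_contra hcon
  push_neg at hcon
  have hepos : 0 < Multiset.card e := by omega
  obtain ⟨A₀, hA₀⟩ := Multiset.card_pos_iff_exists_mem.mp hepos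
  set j := h A₀ % t with hj
  have hmono : ∀ A ∈ e, h A % t = j := by
    intro A hA
    have := hcon A hA A₀ hA₀
    exact congrArg Fin.val this
  rcases Nat.eq_zero_or_pos j with hj0 | hjpos
  · -- color 0 : all sets inside the first block
    set B₀ : Finset (Fin n) := Finset.univ.filter fun x : Fin n => x.val < t₁ with hB₀
    have hsub : ∀ A ∈ e, A.1 ⊆ B₀ := by
      intro A hA x hx
      have hht : h A = t := by
        have h1 := hmono A hA
        have h2 := hhub A
        have h3 := hhlb A
        rw [hj0] at h1
        rcases Nat.lt_or_ge (h A) t with hlt | hge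
        · rw [Nat.mod_eq_of_lt hlt] at h1; omega
        · omega
      have hxg : t ≤ g x := hht ▸ Finset.inf'_le g hx
      by_contra hxB
      have hxt : ¬ x.val < t₁ := by
        simp only [hB₀, Finset.mem_filter, Finset.mem_univ, true_and] at hxB
        exact hxB
      have : g x < t := by
        simp only [hg, hxt, if_false]
        exact L1 x.val x.isLt (by omega)
      omega
    have hsum1 : ∑ x ∈ B₀, (e.filter fun A => x ∈ A.1).card = r * k := by
      rw [sum_card_filter_aux]
      have hmap : (e.map fun A => (B₀.filter fun x => x ∈ A.1).card) = e.map fun _ => k := by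
        apply Multiset.map_congr rfl
        intro A hA
        have : B₀.filter (fun x => x ∈ A.1) = A.1 := by
          ext x
          simp only [Finset.mem_filter]
          exact ⟨fun hx => hx.2, fun hx => ⟨hsub A hA hx, hx⟩⟩
        rw [this, A.2]
      rw [hmap, Multiset.map_const', Multiset.sum_replicate, hcard, smul_eq_mul]
    have hB₀card : B₀.card ≤ t₁ := by
      have : B₀.card ≤ (Finset.range t₁).card := by
        apply Finset.card_le_card_of_injOn (fun x => x.val)
        · intro x hx
          simp only [hB₀, Finset.mem_filter, Finset.mem_univ, true_and] at hx
          simpa using hx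
        · exact fun x _ y _ hxy => Fin.ext hxy
      simpa using this
    have hsum2 : ∑ x ∈ B₀, (e.filter fun A => x ∈ A.1).card ≤ B₀.card * s := by
      calc ∑ x ∈ B₀, (e.filter fun A => x ∈ A.1).card ≤ B₀.card • s :=
            Finset.sum_le_card_nsmul _ _ _ fun x _ => hdisj x
        _ = B₀.card * s := nsmul_eq_mul _ _
    have ht₁s : t₁ * s ≤ r * k - 1 := Nat.div_mul_le_self _ _
    have : r * k ≤ t₁ * s := by
      calc r * k = ∑ x ∈ B₀, (e.filter fun A => x ∈ A.1).card := hsum1.symm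
        _ ≤ B₀.card * s := hsum2
        _ ≤ t₁ * s := Nat.mul_le_mul_right _ hB₀card
    omega
  · -- color j ≥ 1 : all sets meet block j
    have hjt : j < t := Nat.mod_lt _ ht0
    set Bj : Finset (Fin n) :=
      Finset.univ.filter fun x : Fin n => t₁ ≤ x.val ∧ (x.val - t₁) / P + 1 = j with hBj
    have hhit : ∀ A ∈ e, ∃ x ∈ A.1, x ∈ Bj := by
      intro A hA
      have hht : h A = j := by
        have h1 := hmono A hA
        have h2 := hhub A
        have h3 := hhlb A
        rcases Nat.lt_or_ge (h A) t with hlt | hge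
        · rw [Nat.mod_eq_of_lt hlt] at h1; omega
        · have : h A = t := by omega
          rw [this, Nat.mod_self] at h1; omega
      obtain ⟨x, hx, hxg⟩ := Finset.exists_mem_eq_inf' (hk0 A) g
      refine ⟨x, hx, ?_⟩
      have hgx : g x = j := by rw [← hxg]; exact hht
      have hxt : ¬ x.val < t₁ := by
        intro hlt
        simp only [hg, hlt, if_true] at hgx
        omega
      simp only [hg, hxt, if_false] at hgx
      simp only [hBj, Finset.mem_filter, Finset.mem_univ, true_and]
      exact ⟨by omega, hgx⟩
    have hBjcard : Bj.card ≤ P := by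
      have : Bj.card ≤ (Finset.range P).card := by
        apply Finset.card_le_card_of_injOn (fun x => x.val - (t₁ + P * (j - 1)))
        · intro x hx
          simp only [Finset.mem_coe, hBj, Finset.mem_filter, Finset.mem_univ, true_and] at hx
          obtain ⟨hx1, hx2⟩ := hx
          have hdm := Nat.div_add_mod (x.val - t₁) P
          have hmod : (x.val - t₁) % P < P := Nat.mod_lt _ (by omega)
          have hdiv : (x.val - t₁) / P = j - 1 := by omega
          rw [hdiv] at hdm
          simp only [Finset.mem_coe, Finset.mem_range]
          omega
        · intro x hx y hy hxy
          rw [Finset.mem_coe] at hx hy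
          simp only [hBj, Finset.mem_filter, Finset.mem_univ, true_and] at hx hy
          obtain ⟨hx1, hx2⟩ := hx
          obtain ⟨hy1, hy2⟩ := hy
          have hdmx := Nat.div_add_mod (x.val - t₁) P
          have hdmy := Nat.div_add_mod (y.val - t₁) P
          have hdx : (x.val - t₁) / P = j - 1 := by omega
          have hdy : (y.val - t₁) / P = j - 1 := by omega
          rw [hdx] at hdmx
          rw [hdy] at hdmy
          apply Fin.ext
          simp only at hxy
          omega
      simpa using this
    have hlow : r ≤ ∑ x ∈ Bj, (e.filter fun A => x ∈ A.1).card := by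
      rw [sum_card_filter_aux]
      have : Multiset.card (e.map fun A => (Bj.filter fun x => x ∈ A.1).card) = r := by
        rw [Multiset.card_map, hcard]
      rw [← this]
      apply card_le_sum_aux
      intro m hm
      obtain ⟨A, hA, hAm⟩ := Multiset.mem_map.mp hm
      obtain ⟨x, hx1, hx2⟩ := hhit A hA
      have : x ∈ Bj.filter fun y => y ∈ A.1 := Finset.mem_filter.mpr ⟨hx2, hx1⟩
      have := Finset.card_pos.mpr ⟨x, this⟩
      omega
    have hhigh : ∑ x ∈ Bj, (e.filter fun A => x ∈ A.1).card ≤ P * s := by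
      calc ∑ x ∈ Bj, (e.filter fun A => x ∈ A.1).card ≤ Bj.card • s :=
            Finset.sum_le_card_nsmul _ _ _ fun x _ => hdisj x
        _ = Bj.card * s := nsmul_eq_mul _ _
        _ ≤ P * s := Nat.mul_le_mul_right _ hBjcard
    have hPs : P * s ≤ r - 1 := Nat.div_mul_le_self _ _
    omega
end
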